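/- Every plan for a tabletop rearrangement instance consists of at least |{i : sᵢ ≠ gᵢ}| + ν pick-and-place actions, where ν is the minimum cardinality of a feedback vertex set of the dependency digraph of the instance. -/

import Mathlib

open Metric in
/-- A configuration of `n` unit-disc objects in the plane (modeled by `ℂ`) is feasible
if the closed unit discs centered at the object positions are pairwise disjoint. -/
def FeasibleConfig {n : ℕ} (c : Fin n → ℂ) : Prop :=
  ∀ i j : Fin n, i ≠ j → Disjoint (closedBall (c i) 1) (closedBall (c j) 1)

/-- A pick-and-place action changes the position of exactly one object. -/
def PickPlace {n : ℕ} (c c' : Fin n → ℂ) : Prop :=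
  ∃ i : Fin n, c' i ≠ c i ∧ ∀ j : Fin n, j ≠ i → c' j = c j

/-- `plan`, the list of configurations resulting from the successive pick-and-place
actions, is a plan transforming the start configuration `s` into the goal
configuration `g`: each action changes the position of exactly one object, each
resulting configuration is feasible, and the final configuration is the goal.  The
number of actions of the plan is `plan.length`. -/
def IsPlan {n : ℕ} (s g : Fin n → ℂ) (plan : List (Fin n → ℂ)) : Prop :=
  List.Chain PickPlace s plan ∧ (∀ c ∈ plan, FeasibleConfig c) ∧
    (s :: plan).getLast (by simp) = g

open Metric in
/-- The dependency digraph of the instance: an arc from `i` to `j` (for `i ≠ j`) exactly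
when the closed unit disc centered at `g i` intersects the closed unit disc centered at
`s j`. -/
def DepArc {n : ℕ} (s g : Fin n → ℂ) (i j : Fin n) : Prop :=
  i ≠ j ∧ (Metric.closedBall (g i) 1 ∩ Metric.closedBall (s j) 1).Nonempty

/-- `S` is a feedback vertex set of the digraph with arc relation `A`: the subdigraph
induced on the complement of `S` contains no directed cycle (no nontrivial closed
directed walk). -/
def IsFVS {V : Type*} (A : V → V → Prop) (S : Set V) : Prop :=
  ∀ x : V, ¬ Relation.TransGen (fun u v => A u v ∧ u ∉ S ∧ v ∉ S) x x

/-- `ν(D)`: the minimum cardinality of a feedback vertex set of the digraph with vertex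
type `V` and arc relation `A`. -/
noncomputable def nuFVS {V : Type*} (A : V → V → Prop) : ℕ :=
  sInf {k | ∃ S : Set V, IsFVS A S ∧ S.ncard = k}

open Metric in
/-- Every plan for a tabletop rearrangement instance consists of at least
`|{i : sᵢ ≠ gᵢ}| + ν` pick-and-place actions, where `ν` is the minimum cardinality of a
feedback vertex set of the dependency digraph of the instance. -/
theorem stmt_13 {n : ℕ} (s g : Fin n → ℂ)
    (hs : ∀ i j : Fin n, i ≠ j → Disjoint (closedBall (s i) 1) (closedBall (s j) 1))
    (hg : ∀ i j : Fin n, i ≠ j → Disjoint (closedBall (g i) 1) (closedBall (g j) 1)) :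
    ∀ plan : List (Fin n → ℂ), IsPlan s g plan →
      {i : Fin n | s i ≠ g i}.ncard + nuFVS (DepArc s g) ≤ plan.length := by
  intro plan hplan
  obtain ⟨hchain, hfeas, hlast⟩ := hplan
  set m := plan.length with hm
  set L := s :: plan with hL
  have hLlen : L.length = m + 1 := by simp [hL, hm]
  set P : ℕ → Fin n → ℂ := fun k => L.getD k g with hPdef
  have hP0 : P 0 = s := rfl
  have hget : ∀ (k : ℕ) (hk : k < m + 1), P k = L.get ⟨k, by omega⟩ := by
    intro k hk
    show L.getD k g = _
    rw [List.getD_eq_getElem?_getD, List.getElem?_eq_getElem (by omega), Option.getD_some]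
    rfl
  have hPm : P m = g := by
    rw [hget m (by omega), ← hlast, List.getLast_eq_getElem]
    congr 1
  have hchain' : List.Chain' PickPlace L := hchain
  have hstep : ∀ t, t < m → PickPlace (P t) (P (t + 1)) := by
    intro t ht
    have := List.isChain_iff_getElem.mp hchain' t (by rw [hLlen]; omega)
    rw [hget t (by omega), hget (t+1) (by omega)]; exact this
  have hfeas' : ∀ t, t < m → FeasibleConfig (P (t + 1)) := by
    intro t ht
    apply hfeas
    have h1 : P (t + 1) = plan.getD t g := rfl
    have h2 : t < plan.length := by omega
    rw [h1, List.getD_eq_getElem?_getD, List.getElem?_eq_getElem h2, Option.getD_some]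
    exact List.getElem_mem h2
  -- the set of times at which object i moves
  set D : Fin n → Finset ℕ := fun i => (Finset.range m).filter (fun t => P (t + 1) i ≠ P t i)
    with hD
  have hmemD : ∀ i t, t ∈ D i ↔ t < m ∧ P (t + 1) i ≠ P t i := by
    intro i t; simp [hD]
  -- positions are constant over intervals with no move
  have hconst : ∀ (i : Fin n) (a b : ℕ), a ≤ b → b ≤ m →
      (∀ t, a ≤ t → t < b → t ∉ D i) → P b i = P a i := by
    intro i a b hab
    induction b, hab using Nat.le_induction with
    | base => intro _ _; rfl
    | succ b hab ih =>
      intro hbm hno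
      have h1 : P (b + 1) i = P b i := by
        by_contra hne
        exact hno b hab (Nat.lt_succ_self b) ((hmemD i b).mpr ⟨by omega, hne⟩)
      rw [h1]
      exact ih (by omega) (fun t hat htb => hno t hat (by omega))
  -- total number of actions equals the sum of move counts
  have hsum : ∑ i : Fin n, (D i).card = m := by
    have : ∀ t ∈ Finset.range m,
        (Finset.univ.filter (fun i : Fin n => P (t + 1) i ≠ P t i)).card = 1 := by
      intro t ht
      rw [Finset.mem_range] at ht
      obtain ⟨i0, hi0, hoth⟩ := hstep t ht
      rw [Finset.card_eq_one]
      refine ⟨i0, ?_⟩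
      ext j
      simp only [Finset.mem_filter, Finset.mem_univ, true_and, Finset.mem_singleton]
      constructor
      · intro hj
        by_contra hne
        exact hj (hoth j hne)
      · intro hj; rw [hj]; exact hi0
    calc ∑ i : Fin n, (D i).card
        = ∑ i : Fin n, ∑ t ∈ Finset.range m, if P (t + 1) i ≠ P t i then 1 else 0 := by
          simp [hD, Finset.card_filter]
      _ = ∑ t ∈ Finset.range m, ∑ i : Fin n, if P (t + 1) i ≠ P t i then 1 else 0 := by
          rw [Finset.sum_comm]
      _ = ∑ t ∈ Finset.range m, 1 := by
          apply Finset.sum_congr rfl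
          intro t ht
          rw [← Finset.card_filter]
          exact this t ht
      _ = m := by simp
  -- objects that must move at least once
  have hM1 : ∀ i : Fin n, s i ≠ g i → 1 ≤ (D i).card := by
    intro i hi
    rw [Nat.one_le_iff_ne_zero, Ne, Finset.card_eq_zero]
    intro hemp
    apply hi
    have := hconst i 0 m (by omega) le_rfl (fun t _ _ ht => by rw [hemp] at ht; simp at ht)
    rw [hPm, hP0] at this
    exact this.symm
  -- the set of objects moved at least twice
  set X : Set (Fin n) := {i : Fin n | 2 ≤ (D i).card} with hX
  -- key lemma: along arcs between objects moved at most once, the move time decreases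
  set μ : Fin n → ℕ := fun i => (D i).sup Nat.succ with hμ
  have key : ∀ u v : Fin n, DepArc s g u v → u ∉ X → v ∉ X → μ v < μ u := by
    intro u v ⟨huv, x, hxu, hxv⟩ hu hv
    rw [hX, Set.mem_setOf_eq, not_le, Nat.lt_succ_iff] at hu hv
    rcases Nat.le_one_iff_eq_zero_or_eq_one.mp hu with hu0 | hu1
    · -- u never moves: g u = s u, contradicting disjointness of start discs
      exfalso
      rw [Finset.card_eq_zero] at hu0
      have hgu : g u = s u := by
        have := hconst u 0 m (by omega) le_rfl (fun t _ _ ht => by rw [hu0] at ht; simp at ht)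
        rw [hPm, hP0] at this; exact this
      rw [hgu] at hxu
      exact Set.not_disjoint_iff.mpr ⟨x, hxu, hxv⟩ (hs u v huv)
    · rw [Finset.card_eq_one] at hu1
      obtain ⟨tu, htu⟩ := hu1
      have htum : tu < m ∧ P (tu + 1) u ≠ P tu u := (hmemD u tu).mp (htu ▸ Finset.mem_singleton_self tu)
      -- object u is at g u from time tu+1 on
      have hug : P (tu + 1) u = g u := by
        have := hconst u (tu + 1) m (by omega) le_rfl
          (fun t hat htb ht => by
            rw [htu, Finset.mem_singleton] at ht; omega)
        rw [hPm] at this; exact this.symm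
      -- helper: if v is still at s v at time tu+1 we get a contradiction
      have hcontra : P (tu + 1) v ≠ s v := by
        intro hvs
        have hfe := hfeas' tu htum.1 u v huv
        rw [hug, hvs] at hfe
        exact Set.not_disjoint_iff.mpr ⟨x, hxu, hxv⟩ hfe
      rcases Nat.le_one_iff_eq_zero_or_eq_one.mp hv with hv0 | hv1
      · exfalso
        rw [Finset.card_eq_zero] at hv0
        apply hcontra
        have := hconst v 0 (tu + 1) (by omega) (by omega)
          (fun t _ _ ht => by rw [hv0] at ht; simp at ht)
        rw [hP0] at this; exact this
      · rw [Finset.card_eq_one] at hv1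
        obtain ⟨tv, htv⟩ := hv1
        have htvm : tv < m ∧ P (tv + 1) v ≠ P tv v := (hmemD v tv).mp (htv ▸ Finset.mem_singleton_self tv)
        have htvtu : tv < tu := by
          by_contra hle
          push_neg at hle
          rcases eq_or_lt_of_le hle with heq | hlt
          · -- tu = tv : both u and v move at the same step, impossible
            obtain ⟨i0, hi0, hoth⟩ := hstep tu htum.1
            have h1 : u = i0 := by
              by_contra hne; exact htum.2 (hoth u hne)
            have h2 : v = i0 := by
              by_contra hne
              exact htvm.2 (by rw [← heq]; exact hoth v hne)
            exact huv (h1.trans h2.symm)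
          · -- tu < tv : v still at s v at time tu+1
            apply hcontra
            have := hconst v 0 (tu + 1) (by omega) (by omega)
              (fun t _ htb ht => by rw [htv, Finset.mem_singleton] at ht; omega)
            rw [hP0] at this; exact this
        rw [hμ]
        simp only [htu, htv, Finset.sup_singleton]
        omega
  -- X is a feedback vertex set
  have hfvs : IsFVS (DepArc s g) X := by
    intro x hcyc
    have mono : ∀ a b : Fin n,
        Relation.TransGen (fun u v => DepArc s g u v ∧ u ∉ X ∧ v ∉ X) a b → μ b < μ a := by
      intro a b h
      induction h with
      | single h => exact key _ _ h.1 h.2.1 h.2.2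
      | tail _ hk ih => exact (key _ _ hk.1 hk.2.1 hk.2.2).trans ih
    exact absurd (mono x x hcyc) (lt_irrefl _)
  -- counting
  set XF : Finset (Fin n) := Finset.univ.filter (fun i => 2 ≤ (D i).card) with hXF
  have hXcoe : X = ↑XF := by
    ext i; simp [hX, hXF]
  have hnu : nuFVS (DepArc s g) ≤ XF.card := by
    apply Nat.sInf_le
    exact ⟨X, hfvs, by rw [hXcoe, Set.ncard_coe_finset]⟩
  set MF : Finset (Fin n) := Finset.univ.filter (fun i => s i ≠ g i) with hMF
  have hMcoe : {i : Fin n | s i ≠ g i}.ncard = MF.card := by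
    rw [hMF, ← Set.ncard_coe_finset]
    congr 1
    ext i; simp
  have hcount : MF.card + XF.card ≤ m := by
    rw [← hsum, hMF, hXF, Finset.card_filter, Finset.card_filter, ← Finset.sum_add_distrib]
    apply Finset.sum_le_sum
    intro i _
    have hd := hM1 i
    split_ifs with h1 h2 h2
    all_goals try omega
    all_goals (have := hd h1; omega)
  calc {i : Fin n | s i ≠ g i}.ncard + nuFVS (DepArc s g)
      ≤ MF.card + XF.card := by rw [hMcoe]; exact Nat.add_le_add_left hnu _
    _ ≤ m := hcount
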